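/- Let f be a time-varying vector field on E = EuclideanSpace ℝ (Fin n) with f(·,t) globally Lipschitz with constant L > 0 for every t, and let φ be a flow for f that is differentiable in the initial state with derivative Dφ(t;t₀,x) such that τ ↦ Dφ(τ;t,x)y is continuous for each t,x,y. Assume the incremental exponential bound ‖Dφ(τ;t,x) y‖ ≤ K e^{−λ(τ−t)} ‖y‖ and the Lipschitz lower bound ‖Dφ(τ;t,x) y‖ ≥ e^{−L(τ−t)} ‖y‖ hold for all τ ≥ t, x, y, where K ≥ 1 and λ > 0. Fix p ≥ 1 and δ > 0 and define V(t,x,y) = ∫_t^{t+δ} ‖Dφ(τ;t,x) y‖^p dτ. Then for all t, x, y: ((1 − e^{−pLδ})/(pL)) ‖y‖^p ≤ V(t,x,y) ≤ (K^p (1 − e^{−pλδ})/(pλ)) ‖y‖^p. -/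

import Mathlib

noncomputable section

/-- The Euclidean state space. -/
abbrev E (n : ℕ) := EuclideanSpace ℝ (Fin n)

/-- `x` is a solution of `ẋ = f(x,t)` starting at `(t₀, x₀)`. -/
def IsSolution {n : ℕ} (f : E n → ℝ → E n) (t₀ : ℝ) (x₀ : E n) (x : ℝ → E n) : Prop :=
  x t₀ = x₀ ∧ ∀ t, t₀ ≤ t → HasDerivAt x (f (x t) t) t

/-- `φ` is a flow for `f`: `φ t₀ t₀ x = x` and `t ↦ φ t t₀ x` solves `ẋ = f(x,t)`. -/
def IsFlow {n : ℕ} (f : E n → ℝ → E n) (φ : ℝ → ℝ → E n → E n) : Prop :=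
  ∀ t₀ x, IsSolution f t₀ x (fun t => φ t t₀ x)

/-- Auxiliary: `∫_t^{t+δ} e^{-c(τ-t)} dτ = (1 - e^{-cδ})/c` for `c > 0`. -/
lemma exp_decay_integral (c t δ : ℝ) (hc : 0 < c) :
    (∫ τ in t..(t + δ), Real.exp (-(c * (τ - t)))) = (1 - Real.exp (-(c * δ))) / c := by
  have hderiv : ∀ τ ∈ Set.uIcc t (t + δ),
      HasDerivAt (fun τ => -(1 / c) * Real.exp (-(c * (τ - t))))
        (Real.exp (-(c * (τ - t)))) τ := by
    intro τ _
    have h1 : HasDerivAt (fun τ : ℝ => -(c * (τ - t))) (-c) τ := by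
      have : HasDerivAt (fun τ : ℝ => τ - t) 1 τ := (hasDerivAt_id τ).sub_const t
      have h := (this.const_mul c).neg
      simp only [mul_one] at h
      exact h
    have h2 := (Real.hasDerivAt_exp (-(c * (τ - t)))).comp τ h1
    have h3 := h2.const_mul (-(1 / c))
    convert h3 using 1
    case e'_4 => rfl
    case e'_5 => rfl
    case e'_8 => rfl
    have hc' : c ≠ 0 := hc.ne'
    field_simp
  have hint : IntervalIntegrable (fun τ => Real.exp (-(c * (τ - t)))) MeasureTheory.volume t (t + δ) := by
    apply Continuous.intervalIntegrable
    exact Real.continuous_exp.comp (by continuity)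
  rw [intervalIntegral.integral_eq_sub_of_hasDerivAt hderiv hint]
  simp only [add_sub_cancel_left, sub_self, mul_zero, neg_zero, Real.exp_zero]
  field_simp
  ring

/-- Bounds on the candidate Finsler–Lyapunov function
`V(t,x,y) = ∫_t^{t+δ} ‖Dφ(τ;t,x) y‖^p dτ`:
`((1 − e^{−pLδ})/(pL)) ‖y‖^p ≤ V(t,x,y) ≤ (K^p (1 − e^{−pλδ})/(pλ)) ‖y‖^p`. -/
theorem candidate_flf_bounds {n : ℕ} (f : E n → ℝ → E n) (L : ℝ) (hL : 0 < L)
    (hf : ∀ (t : ℝ) (p q : E n), ‖f p t - f q t‖ ≤ L * ‖p - q‖)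
    (φ : ℝ → ℝ → E n → E n) (hφ : IsFlow f φ)
    (Dφ : ℝ → ℝ → E n → (E n →L[ℝ] E n))
    (hDφ : ∀ t t₀ x, t₀ ≤ t → HasFDerivAt (fun z => φ t t₀ z) (Dφ t t₀ x) x)
    (hcont : ∀ (t : ℝ) (x y : E n), Continuous fun τ => Dφ τ t x y)
    (K lam : ℝ) (hK : 1 ≤ K) (hlam : 0 < lam)
    (hupper : ∀ (t τ : ℝ) (x y : E n), t ≤ τ →
      ‖Dφ τ t x y‖ ≤ K * Real.exp (-lam * (τ - t)) * ‖y‖)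
    (hlower : ∀ (t τ : ℝ) (x y : E n), t ≤ τ →
      Real.exp (-L * (τ - t)) * ‖y‖ ≤ ‖Dφ τ t x y‖)
    (p δ : ℝ) (hp : 1 ≤ p) (hδ : 0 < δ)
    (V : ℝ → E n → E n → ℝ)
    (hV : ∀ (t : ℝ) (x y : E n), V t x y = ∫ τ in t..(t + δ), ‖Dφ τ t x y‖ ^ p) :
    ∀ (t : ℝ) (x y : E n),
      (1 - Real.exp (-(p * L * δ))) / (p * L) * ‖y‖ ^ p ≤ V t x y ∧
      V t x y ≤ K ^ p * (1 - Real.exp (-(p * lam * δ))) / (p * lam) * ‖y‖ ^ p := by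
  intro t x y
  have hp0 : 0 < p := lt_of_lt_of_le one_pos hp
  have htδ : t ≤ t + δ := by linarith
  -- continuity / integrability of the main integrand
  have hcontV : Continuous fun τ => ‖Dφ τ t x y‖ ^ p :=
    ((hcont t x y).norm).rpow_const (fun τ => Or.inr hp0.le)
  have hintV : IntervalIntegrable (fun τ => ‖Dφ τ t x y‖ ^ p)
      MeasureTheory.volume t (t + δ) := hcontV.intervalIntegrable _ _
  have hintLo : IntervalIntegrable (fun τ => Real.exp (-(p * L * (τ - t))) * ‖y‖ ^ p)
      MeasureTheory.volume t (t + δ) := by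
    apply Continuous.intervalIntegrable
    exact (Real.continuous_exp.comp (by continuity)).mul continuous_const
  have hintHi : IntervalIntegrable (fun τ => K ^ p * Real.exp (-(p * lam * (τ - t))) * ‖y‖ ^ p)
      MeasureTheory.volume t (t + δ) := by
    apply Continuous.intervalIntegrable
    exact ((continuous_const.mul (Real.continuous_exp.comp (by continuity)))).mul continuous_const
  have hK0 : (0:ℝ) ≤ K := le_trans zero_le_one hK
  constructor
  · -- lower bound
    have hmono : ∀ τ ∈ Set.Icc t (t + δ),
        Real.exp (-(p * L * (τ - t))) * ‖y‖ ^ p ≤ ‖Dφ τ t x y‖ ^ p := by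
      intro τ hτ
      have hle := hlower t τ x y hτ.1
      have h0 : (0:ℝ) ≤ Real.exp (-L * (τ - t)) * ‖y‖ :=
        mul_nonneg (Real.exp_pos _).le (norm_nonneg _)
      have := Real.rpow_le_rpow h0 hle hp0.le
      calc Real.exp (-(p * L * (τ - t))) * ‖y‖ ^ p
          = (Real.exp (-L * (τ - t)) * ‖y‖) ^ p := by
            rw [Real.mul_rpow (Real.exp_pos _).le (norm_nonneg _), ← Real.exp_mul]
            ring_nf
        _ ≤ ‖Dφ τ t x y‖ ^ p := this
    have hmono' := intervalIntegral.integral_mono_on htδ hintLo hintV hmono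
    have hcalc : (∫ τ in t..(t + δ), Real.exp (-(p * L * (τ - t))) * ‖y‖ ^ p)
        = (1 - Real.exp (-(p * L * δ))) / (p * L) * ‖y‖ ^ p := by
      rw [intervalIntegral.integral_mul_const, exp_decay_integral (p * L) t δ (by positivity)]
    rw [hV]
    rw [hcalc] at hmono'
    exact hmono'
  · -- upper bound
    have hmono : ∀ τ ∈ Set.Icc t (t + δ),
        ‖Dφ τ t x y‖ ^ p ≤ K ^ p * Real.exp (-(p * lam * (τ - t))) * ‖y‖ ^ p := by
      intro τ hτ
      have hle := hupper t τ x y hτ.1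
      have := Real.rpow_le_rpow (norm_nonneg _) hle hp0.le
      calc ‖Dφ τ t x y‖ ^ p ≤ (K * Real.exp (-lam * (τ - t)) * ‖y‖) ^ p := this
        _ = K ^ p * Real.exp (-(p * lam * (τ - t))) * ‖y‖ ^ p := by
            rw [Real.mul_rpow (mul_nonneg hK0 (Real.exp_pos _).le) (norm_nonneg _),
              Real.mul_rpow hK0 (Real.exp_pos _).le, ← Real.exp_mul]
            ring_nf
    have hmono' := intervalIntegral.integral_mono_on htδ hintV hintHi hmono
    have hcalc : (∫ τ in t..(t + δ), K ^ p * Real.exp (-(p * lam * (τ - t))) * ‖y‖ ^ p)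
        = K ^ p * (1 - Real.exp (-(p * lam * δ))) / (p * lam) * ‖y‖ ^ p := by
      have hrw : ∀ τ : ℝ, K ^ p * Real.exp (-(p * lam * (τ - t))) * ‖y‖ ^ p
          = (K ^ p * ‖y‖ ^ p) * Real.exp (-(p * lam * (τ - t))) := fun τ => by ring
      simp only [hrw]
      rw [intervalIntegral.integral_const_mul, exp_decay_integral (p * lam) t δ (by positivity)]
      ring
    rw [hV]
    rw [hcalc] at hmono'
    exact hmono'
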